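/- arXiv:1811.12149 — 2 statements merged into one kernel-verified Lean document; each statement's English description precedes it below -/
import Mathlib

section
/- Fix p < 0, a compact set S ⊆ ℝ^d, ε ∈ (0,2], and a compact set K ⊆ ℝ^d with x^T z ≥ -1 + 1/n for all x ∈ K, z ∈ S, and |x| ≤ κ for x ∈ K. Define I(z,x) = [p^{-1}((1 + x^T z)^p - 1) - x^T z]/(|z|^{2-ε} ∧ 1) for z ≠ 0 and I(0,x) = 0. Then I is continuous on S × K, and I(z,·) is Lipschitz in x uniformly in z ∈ S, with Lipschitz constant depending only on n, κ, p, ε. -/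
open scoped RealInnerProductSpace
open Classical

noncomputable def gfun (p : ℝ) : ℝ → ℝ := fun t => p⁻¹ * ((1 + t) ^ p - 1) - t
noncomputable def gfun' (p : ℝ) : ℝ → ℝ := fun t => (1 + t) ^ (p - 1) - 1

lemma gfun_hasDerivAt {p t : ℝ} (hp : p ≠ 0) (ht : 0 < 1 + t) :
    HasDerivAt (gfun p) (gfun' p t) t := by
  have h1 : HasDerivAt (fun s : ℝ => 1 + s) 1 t := (hasDerivAt_id t).const_add 1
  have h2 : HasDerivAt (fun s : ℝ => s ^ p) (p * (1 + t) ^ (p - 1)) (1 + t) :=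
    Real.hasDerivAt_rpow_const (Or.inl ht.ne')
  have h3 := (h2.comp t h1)
  have h4 : HasDerivAt (gfun p) (p⁻¹ * (p * (1 + t) ^ (p - 1) * 1) - 1) t :=
    ((h3.sub_const 1).const_mul p⁻¹).sub (hasDerivAt_id t)
  convert h4 using 1
  unfold gfun'
  field_simp

lemma gfun'_hasDerivAt {p t : ℝ} (ht : 0 < 1 + t) :
    HasDerivAt (gfun' p) ((p - 1) * (1 + t) ^ (p - 2)) t := by
  have h1 : HasDerivAt (fun s : ℝ => 1 + s) 1 t := (hasDerivAt_id t).const_add 1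
  have h2 : HasDerivAt (fun s : ℝ => s ^ (p - 1)) ((p - 1) * (1 + t) ^ (p - 1 - 1)) (1 + t) :=
    Real.hasDerivAt_rpow_const (Or.inl ht.ne')
  have h3 := (h2.comp t h1).sub_const 1
  convert h3 using 1
  exacts [rfl, rfl, rfl, by ring_nf]

lemma gfun_two_point {p a b : ℝ} (hp : p < 0) (ha : 0 < a) (ha1 : a ≤ 1) (hb : 1 ≤ b)
    {y y' : ℝ} (hy : y ∈ Set.Icc (a - 1) (b - 1)) (hy' : y' ∈ Set.Icc (a - 1) (b - 1)) :
    |gfun p y - gfun p y'| ≤ (|p - 1| * a ^ (p - 2)) * max |y| |y'| * |y - y'| := by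
  set C : ℝ := |p - 1| * a ^ (p - 2) with hC
  have hC0 : 0 ≤ C := mul_nonneg (abs_nonneg _) (Real.rpow_nonneg ha.le _)
  have hIcc : Convex ℝ (Set.Icc (a - 1) (b - 1)) := convex_Icc _ _
  have hpos : ∀ t ∈ Set.Icc (a - 1) (b - 1), 0 < 1 + t := fun t ht => by
    have := ht.1; linarith
  have h0mem : (0 : ℝ) ∈ Set.Icc (a - 1) (b - 1) := ⟨by linarith, by linarith⟩
  have step1 : ∀ t ∈ Set.Icc (a - 1) (b - 1), |gfun' p t| ≤ C * |t| := by
    intro t ht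
    have hderiv : ∀ u ∈ Set.Icc (a - 1) (b - 1),
        HasDerivWithinAt (gfun' p) ((p - 1) * (1 + u) ^ (p - 2)) (Set.Icc (a - 1) (b - 1)) u :=
      fun u hu => (gfun'_hasDerivAt (hpos u hu)).hasDerivWithinAt
    have hbound : ∀ u ∈ Set.Icc (a - 1) (b - 1), ‖(p - 1) * (1 + u) ^ (p - 2)‖ ≤ C := by
      intro u hu
      rw [Real.norm_eq_abs, abs_mul, abs_of_nonneg (Real.rpow_nonneg (hpos u hu).le _)]
      exact mul_le_mul_of_nonneg_left
        (Real.rpow_le_rpow_of_nonpos ha (by linarith [hu.1]) (by linarith)) (abs_nonneg _)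
    have := hIcc.norm_image_sub_le_of_norm_hasDerivWithin_le hderiv hbound h0mem ht
    simpa [gfun', Real.one_rpow] using this
  rcases le_total y' y with hle | hle
  · have hsub : Set.Icc y' y ⊆ Set.Icc (a - 1) (b - 1) :=
      Set.Icc_subset_Icc hy'.1 hy.2
    have hderiv : ∀ u ∈ Set.Icc y' y,
        HasDerivWithinAt (gfun p) (gfun' p u) (Set.Icc y' y) u :=
      fun u hu => (gfun_hasDerivAt hp.ne (hpos u (hsub hu))).hasDerivWithinAt
    have hbound : ∀ u ∈ Set.Icc y' y, ‖gfun' p u‖ ≤ C * max |y| |y'| := by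
      intro u hu
      refine (step1 u (hsub hu)).trans ?_
      exact mul_le_mul_of_nonneg_left
        ((abs_le_max_abs_abs hu.1 hu.2).trans (by rw [max_comm])) hC0
    have := (convex_Icc y' y).norm_image_sub_le_of_norm_hasDerivWithin_le hderiv hbound
      (Set.right_mem_Icc.mpr hle) (Set.left_mem_Icc.mpr hle)
    simpa [Real.norm_eq_abs, abs_sub_comm y' y, abs_sub_comm (gfun p y') (gfun p y)] using this
  · have hsub : Set.Icc y y' ⊆ Set.Icc (a - 1) (b - 1) :=
      Set.Icc_subset_Icc hy.1 hy'.2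
    have hderiv : ∀ u ∈ Set.Icc y y',
        HasDerivWithinAt (gfun p) (gfun' p u) (Set.Icc y y') u :=
      fun u hu => (gfun_hasDerivAt hp.ne (hpos u (hsub hu))).hasDerivWithinAt
    have hbound : ∀ u ∈ Set.Icc y y', ‖gfun' p u‖ ≤ C * max |y| |y'| := by
      intro u hu
      refine (step1 u (hsub hu)).trans ?_
      exact mul_le_mul_of_nonneg_left (abs_le_max_abs_abs hu.1 hu.2) hC0
    have := (convex_Icc y y').norm_image_sub_le_of_norm_hasDerivWithin_le hderiv hbound
      (Set.left_mem_Icc.mpr hle) (Set.right_mem_Icc.mpr hle)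
    simpa [Real.norm_eq_abs, abs_sub_comm y' y, abs_sub_comm (gfun p y') (gfun p y)] using this

lemma gfun_zero {p : ℝ} : gfun p 0 = 0 := by
  simp [gfun, Real.one_rpow]

theorem stmt_17 (d : ℕ) (p ε κ : ℝ) (hp : p < 0) (hε : ε ∈ Set.Ioc (0:ℝ) 2)
    (n : ℕ) (hn : 0 < n)
    (S K : Set (EuclideanSpace ℝ (Fin d)))
    (hScomp : IsCompact S) (hKcomp : IsCompact K)
    (hsep : ∀ x ∈ K, ∀ z ∈ S, -1 + 1 / (n : ℝ) ≤ ⟪x, z⟫)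
    (hκ : ∀ x ∈ K, ‖x‖ ≤ κ)
    (I : EuclideanSpace ℝ (Fin d) × EuclideanSpace ℝ (Fin d) → ℝ)
    (hI : ∀ z x, I (z, x) =
      if z = 0 then 0
      else (p⁻¹ * ((1 + ⟪x, z⟫) ^ p - 1) - ⟪x, z⟫) / (min (‖z‖ ^ (2 - ε)) 1)) :
    ContinuousOn I (S ×ˢ K) ∧
    ∃ L : ℝ, 0 ≤ L ∧ ∀ z ∈ S, ∀ x ∈ K, ∀ x' ∈ K,
      |I (z, x) - I (z, x')| ≤ L * ‖x - x'‖ := by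
  obtain ⟨hε0, hε2⟩ := hε
  obtain ⟨R₀, hR₀⟩ := hScomp.isBounded.exists_norm_le
  set R : ℝ := max R₀ 0 with hRdef
  have hR : ∀ z ∈ S, ‖z‖ ≤ R := fun z hz => (hR₀ z hz).trans (le_max_left _ _)
  have hR0 : 0 ≤ R := le_max_right _ _
  set κ' : ℝ := max κ 0 with hκ'def
  have hκ' : ∀ x ∈ K, ‖x‖ ≤ κ' := fun x hx => (hκ x hx).trans (le_max_left _ _)
  have hκ'0 : 0 ≤ κ' := le_max_right _ _
  set a : ℝ := 1 / (n : ℝ) with hadef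
  have hn' : (0:ℝ) < (n : ℝ) := by exact_mod_cast hn
  have ha : 0 < a := by positivity
  have ha1 : a ≤ 1 := by
    rw [hadef, div_le_one hn']
    exact_mod_cast hn
  set b : ℝ := 1 + κ' * R with hbdef
  have hb : 1 ≤ b := by nlinarith
  set C : ℝ := |p - 1| * a ^ (p - 2) with hCdef
  have hC0 : 0 ≤ C := mul_nonneg (abs_nonneg _) (Real.rpow_nonneg ha.le _)
  -- membership of inner products in the interval
  have hmem : ∀ z ∈ S, ∀ x ∈ K, ⟪x, z⟫ ∈ Set.Icc (a - 1) (b - 1) := by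
    intro z hz x hx
    constructor
    · have := hsep x hx z hz
      rw [hadef]; linarith
    · have h1 : |⟪x, z⟫| ≤ ‖x‖ * ‖z‖ := abs_real_inner_le_norm x z
      have h2 : ‖x‖ * ‖z‖ ≤ κ' * R :=
        mul_le_mul (hκ' x hx) (hR z hz) (norm_nonneg _) hκ'0
      have := (le_abs_self ⟪x, z⟫).trans (h1.trans h2)
      rw [hbdef]; linarith
  have habs : ∀ z ∈ S, ∀ x ∈ K, |⟪x, z⟫| ≤ κ' * ‖z‖ := by
    intro z hz x hx
    exact (abs_real_inner_le_norm x z).trans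
      (mul_le_mul_of_nonneg_right (hκ' x hx) (norm_nonneg _))
  have hmin_pos : ∀ z : EuclideanSpace ℝ (Fin d), z ≠ 0 → 0 < min (‖z‖ ^ (2 - ε)) 1 := fun z hz =>
    lt_min (Real.rpow_pos_of_pos (norm_pos_iff.mpr hz) _) one_pos
  -- ratio bound
  have hratio : ∀ z ∈ S, z ≠ 0 →
      ‖z‖ * ‖z‖ ≤ max 1 (R ^ (2:ℝ)) * min (‖z‖ ^ (2 - ε)) 1 := by
    intro z hz hz0
    have hzpos : 0 < ‖z‖ := norm_pos_iff.mpr hz0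
    have hsq : ‖z‖ * ‖z‖ = ‖z‖ ^ (2:ℝ) := by
      rw [show (2:ℝ) = ((2:ℕ):ℝ) by norm_num, Real.rpow_natCast]; ring
    rcases le_total ‖z‖ 1 with h1 | h1
    · have hminq : min (‖z‖ ^ (2 - ε)) 1 = ‖z‖ ^ (2 - ε) :=
        min_eq_left (Real.rpow_le_one (norm_nonneg z) h1 (by linarith))
      have hfact : ‖z‖ ^ (2:ℝ) = ‖z‖ ^ ε * ‖z‖ ^ (2 - ε) := by
        rw [← Real.rpow_add hzpos]; norm_num
      rw [hminq, hsq, hfact]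
      have hε1 : ‖z‖ ^ ε ≤ 1 := Real.rpow_le_one (norm_nonneg z) h1 hε0.le
      exact mul_le_mul_of_nonneg_right (hε1.trans (le_max_left _ _))
        (Real.rpow_nonneg (norm_nonneg z) _)
    · have hminq : min (‖z‖ ^ (2 - ε)) 1 = 1 :=
        min_eq_right (Real.one_le_rpow h1 (by linarith))
      rw [hminq, mul_one, hsq]
      exact (Real.rpow_le_rpow (norm_nonneg z) (hR z hz) (by norm_num)).trans
        (le_max_right _ _)
  set L : ℝ := C * κ' * max 1 (R ^ (2:ℝ)) with hLdef
  have hL0 : 0 ≤ L := by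
    apply mul_nonneg (mul_nonneg hC0 hκ'0)
    exact le_trans zero_le_one (le_max_left _ _)
  -- key two-variable estimate
  have key : ∀ z ∈ S, z ≠ 0 → ∀ x ∈ K, ∀ x' ∈ K,
      |gfun p ⟪x, z⟫ - gfun p ⟪x', z⟫| ≤ L * ‖x - x'‖ * min (‖z‖ ^ (2 - ε)) 1 := by
    intro z hz hz0 x hx x' hx'
    have h1 := gfun_two_point hp ha ha1 hb (hmem z hz x hx) (hmem z hz x' hx')
    have h2 : max |⟪x, z⟫| |⟪x', z⟫| ≤ κ' * ‖z‖ :=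
      max_le (habs z hz x hx) (habs z hz x' hx')
    have h3 : |⟪x, z⟫ - ⟪x', z⟫| ≤ ‖x - x'‖ * ‖z‖ := by
      rw [← inner_sub_left]
      exact abs_real_inner_le_norm _ _
    have h4 := hratio z hz hz0
    calc |gfun p ⟪x, z⟫ - gfun p ⟪x', z⟫|
        ≤ C * max |⟪x, z⟫| |⟪x', z⟫| * |⟪x, z⟫ - ⟪x', z⟫| := h1
      _ ≤ C * (κ' * ‖z‖) * (‖x - x'‖ * ‖z‖) := by
          apply mul_le_mul (mul_le_mul_of_nonneg_left h2 hC0) h3 (abs_nonneg _)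
          exact mul_nonneg hC0 (mul_nonneg hκ'0 (norm_nonneg _))
      _ = (C * κ' * ‖x - x'‖) * (‖z‖ * ‖z‖) := by ring
      _ ≤ (C * κ' * ‖x - x'‖) * (max 1 (R ^ (2:ℝ)) * min (‖z‖ ^ (2 - ε)) 1) := by
          apply mul_le_mul_of_nonneg_left h4
          exact mul_nonneg (mul_nonneg hC0 hκ'0) (norm_nonneg _)
      _ = L * ‖x - x'‖ * min (‖z‖ ^ (2 - ε)) 1 := by rw [hLdef]; ring
  have hIval : ∀ q : EuclideanSpace ℝ (Fin d) × EuclideanSpace ℝ (Fin d), I q =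
      if q.1 = 0 then 0 else gfun p ⟪q.2, q.1⟫ / min (‖q.1‖ ^ (2 - ε)) 1 := by
    intro q
    have := hI q.1 q.2
    rw [Prod.mk.eta] at this
    simpa only [gfun] using this
  constructor
  · -- continuity
    intro q hq
    have hq1 : q.1 ∈ S := hq.1
    have hq2 : q.2 ∈ K := hq.2
    by_cases hz0 : q.1 = 0
    · rw [ContinuousWithinAt]
      have hIq : I q = 0 := by rw [hIval q, if_pos hz0]
      rw [hIq]
      apply squeeze_zero_norm' (a := fun q' : EuclideanSpace ℝ (Fin d) × EuclideanSpace ℝ (Fin d) => (C * κ' ^ 2) * ‖q'.1‖ ^ ε)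
      · have hball : {q' : EuclideanSpace ℝ (Fin d) × EuclideanSpace ℝ (Fin d) | ‖q'.1‖ < 1} ∈ nhdsWithin q (S ×ˢ K) := by
          apply nhdsWithin_le_nhds
          apply IsOpen.mem_nhds (isOpen_lt (continuous_fst.norm) continuous_const)
          simp [hz0]
        filter_upwards [self_mem_nhdsWithin, hball] with q' hq' hlt
        by_cases hz0' : q'.1 = 0
        · rw [hIval q', if_pos hz0']
          simp only [norm_zero]
          positivity
        · rw [hIval q', if_neg hz0']
          have hz1 : q'.1 ∈ S := hq'.1
          have hx1 : q'.2 ∈ K := hq'.2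
          have hzpos : 0 < ‖q'.1‖ := norm_pos_iff.mpr hz0'
          have hminq : min (‖q'.1‖ ^ (2 - ε)) 1 = ‖q'.1‖ ^ (2 - ε) :=
            min_eq_left (Real.rpow_le_one (norm_nonneg _) hlt.le (by linarith))
          have h0 : (0:ℝ) ∈ Set.Icc (a - 1) (b - 1) := ⟨by linarith, by linarith⟩
          have hg := gfun_two_point hp ha ha1 hb (hmem q'.1 hz1 q'.2 hx1) h0
          rw [gfun_zero, sub_zero, abs_zero, max_comm, max_eq_right (abs_nonneg _),
            sub_zero] at hg
          have habs' := habs q'.1 hz1 q'.2 hx1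
          have hnum : |gfun p ⟪q'.2, q'.1⟫| ≤ C * κ' ^ 2 * (‖q'.1‖ * ‖q'.1‖) := by
            calc |gfun p ⟪q'.2, q'.1⟫| ≤ C * |⟪q'.2, q'.1⟫| * |⟪q'.2, q'.1⟫| := hg
              _ ≤ C * (κ' * ‖q'.1‖) * (κ' * ‖q'.1‖) := by
                  apply mul_le_mul (mul_le_mul_of_nonneg_left habs' hC0) habs'
                    (abs_nonneg _)
                  exact mul_nonneg hC0 (mul_nonneg hκ'0 (norm_nonneg _))
              _ = C * κ' ^ 2 * (‖q'.1‖ * ‖q'.1‖) := by ring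
          rw [Real.norm_eq_abs, abs_div, abs_of_pos (hmin_pos q'.1 hz0'),
            div_le_iff₀ (hmin_pos q'.1 hz0'), hminq]
          calc |gfun p ⟪q'.2, q'.1⟫| ≤ C * κ' ^ 2 * (‖q'.1‖ * ‖q'.1‖) := hnum
            _ = C * κ' ^ 2 * ‖q'.1‖ ^ ε * ‖q'.1‖ ^ (2 - ε) := by
                have hfact : ‖q'.1‖ * ‖q'.1‖ = ‖q'.1‖ ^ ε * ‖q'.1‖ ^ (2 - ε) := by
                  rw [← Real.rpow_add hzpos,
                    show ε + (2 - ε) = ((2:ℕ):ℝ) by push_cast; ring, Real.rpow_natCast]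
                  ring
                rw [hfact]; ring
      · have h1 : Filter.Tendsto (fun q' : EuclideanSpace ℝ (Fin d) × EuclideanSpace ℝ (Fin d) => ‖q'.1‖)
            (nhdsWithin q (S ×ˢ K)) (nhds 0) := by
          have := ((continuous_fst.norm).tendsto q).mono_left
            (nhdsWithin_le_nhds (s := S ×ˢ K))
          simpa [hz0] using this
        have h2 : ContinuousAt (fun t : ℝ => t ^ ε) 0 :=
          Real.continuousAt_rpow_const 0 ε (Or.inr hε0.le)
        have h3 := (h2.tendsto).comp h1
        rw [Real.zero_rpow hε0.ne'] at h3
        have h4 := h3.const_mul (C * κ' ^ 2)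
        simpa using h4
    · -- q.1 ≠ 0 : continuity via explicit formula
      have hbase : 0 < 1 + ⟪q.2, q.1⟫ := by
        have := hsep q.2 hq2 q.1 hq1
        have : a - 1 ≤ ⟪q.2, q.1⟫ := by
          rw [hadef]; linarith [hsep q.2 hq2 q.1 hq1]
        linarith
      have hinner : ContinuousAt (fun q' : EuclideanSpace ℝ (Fin d) × EuclideanSpace ℝ (Fin d) => ⟪q'.2, q'.1⟫) q :=
        (continuous_snd.inner continuous_fst).continuousAt
      have hrp : ContinuousAt (fun t : ℝ => t ^ p) (1 + ⟪q.2, q.1⟫) :=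
        Real.continuousAt_rpow_const _ _ (Or.inl hbase.ne')
      have hnum : ContinuousAt
          (fun q' : EuclideanSpace ℝ (Fin d) × EuclideanSpace ℝ (Fin d) => p⁻¹ * ((1 + ⟪q'.2, q'.1⟫) ^ p - 1) - ⟪q'.2, q'.1⟫) q := by
        have h5 : ContinuousAt (fun q' : EuclideanSpace ℝ (Fin d) × EuclideanSpace ℝ (Fin d) => (1 + ⟪q'.2, q'.1⟫) ^ p) q :=
          (continuousAt_const.add hinner).rpow_const (Or.inl hbase.ne')
        exact (continuousAt_const.mul (h5.sub continuousAt_const)).sub hinner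
      have hden : ContinuousAt (fun q' : EuclideanSpace ℝ (Fin d) × EuclideanSpace ℝ (Fin d) => min (‖q'.1‖ ^ (2 - ε)) 1) q :=
        ((continuous_fst.norm.continuousAt).rpow_const
          (Or.inl (norm_ne_zero_iff.mpr hz0))).min continuousAt_const
      have hF : ContinuousAt (fun q' : EuclideanSpace ℝ (Fin d) × EuclideanSpace ℝ (Fin d) =>
          (p⁻¹ * ((1 + ⟪q'.2, q'.1⟫) ^ p - 1) - ⟪q'.2, q'.1⟫) /
            min (‖q'.1‖ ^ (2 - ε)) 1) q :=
        hnum.div hden (hmin_pos q.1 hz0).ne'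
      have heq : (fun q' : EuclideanSpace ℝ (Fin d) × EuclideanSpace ℝ (Fin d) =>
          (p⁻¹ * ((1 + ⟪q'.2, q'.1⟫) ^ p - 1) - ⟪q'.2, q'.1⟫) /
            min (‖q'.1‖ ^ (2 - ε)) 1) =ᶠ[nhds q] I := by
        have hopen : {q' : EuclideanSpace ℝ (Fin d) × EuclideanSpace ℝ (Fin d) | q'.1 ≠ 0} ∈ nhds q := by
          have : IsOpen {q' : EuclideanSpace ℝ (Fin d) × EuclideanSpace ℝ (Fin d) | q'.1 ≠ 0} :=
            isOpen_compl_singleton.preimage continuous_fst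
          exact this.mem_nhds hz0
        filter_upwards [hopen] with q' hq'
        rw [hIval q', if_neg hq']
        rfl
      exact (hF.congr heq).continuousWithinAt
  · -- Lipschitz
    refine ⟨L, hL0, ?_⟩
    intro z hz x hx x' hx'
    by_cases hz0 : z = 0
    · rw [hI z x, hI z x', if_pos hz0, if_pos hz0, sub_zero, abs_zero]
      positivity
    · rw [hI z x, hI z x', if_neg hz0, if_neg hz0, div_sub_div_same, abs_div,
        abs_of_pos (hmin_pos z hz0), div_le_iff₀ (hmin_pos z hz0)]
      exact key z hz hz0 x hx x' hx'
end

section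
/- Let p < 0, T > 0, and g : [0,T] → ℝ bounded measurable with m := inf_t g_t and M := sup_t g_t. Let c*_t = [exp(∫_t^T (p g_u/(1-p)) du) + ∫_t^T exp(∫_t^s (p g_u/(1-p)) du) ds]^{-1}. Then for every t ∈ [0,T], ((-p m/(1-p)) ∨ 0) ∧ 1 ≤ c*_t ≤ (-p M/(1-p)) ∨ 1. -/
open MeasureTheory intervalIntegral

lemma bdd_intInt (f : ℝ → ℝ) (hf : Measurable f) (C : ℝ) (hC : ∀ x, |f x| ≤ C)
    (a b : ℝ) : IntervalIntegrable f volume a b := by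
  rw [intervalIntegrable_iff]
  exact Measure.integrableOn_of_bounded measure_Ioc_lt_top.ne
    hf.aestronglyMeasurable (Filter.Eventually.of_forall fun x => hC x)

lemma exp_prim_intInt (f : ℝ → ℝ) (hf : Measurable f) (C : ℝ) (hC : ∀ x, |f x| ≤ C)
    (t a b : ℝ) : IntervalIntegrable (fun s => Real.exp (∫ u in t..s, f u)) volume a b := by
  have hcont : Continuous fun s => ∫ u in t..s, f u :=
    continuous_primitive (fun a b => bdd_intInt f hf C hC a b) t
  exact (Real.continuous_exp.comp hcont).intervalIntegrable a b

lemma key_mono (f h : ℝ → ℝ) (hfm : Measurable f) (hhm : Measurable h)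
    (Cf Ch : ℝ) (hCf : ∀ x, |f x| ≤ Cf) (hCh : ∀ x, |h x| ≤ Ch)
    (t T : ℝ) (ht : t ≤ T) (hle : ∀ u ∈ Set.Icc t T, f u ≤ h u) :
    Real.exp (∫ u in t..T, f u) + (∫ s in t..T, Real.exp (∫ u in t..s, f u)) ≤
    Real.exp (∫ u in t..T, h u) + (∫ s in t..T, Real.exp (∫ u in t..s, h u)) := by
  have hint : ∀ s, t ≤ s → s ≤ T → (∫ u in t..s, f u) ≤ ∫ u in t..s, h u := by
    intro s hts hsT
    exact integral_mono_on hts (bdd_intInt f hfm Cf hCf t s) (bdd_intInt h hhm Ch hCh t s)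
      (fun x hx => hle x ⟨hx.1, hx.2.trans hsT⟩)
  gcongr
  · exact hint T ht le_rfl
  · exact integral_mono_on ht (exp_prim_intInt f hfm Cf hCf t t T)
      (exp_prim_intInt h hhm Ch hCh t t T)
      (fun s hs => Real.exp_le_exp.2 (hint s hs.1 hs.2))

lemma G_val (r τ : ℝ) (hr : r ≠ 0) :
    (∫ s in (0:ℝ)..τ, Real.exp (-r * s)) = (1 - Real.exp (-r * τ)) / r := by
  have hderiv : ∀ s ∈ Set.uIcc (0:ℝ) τ,
      HasDerivAt (fun s => -(1/r) * Real.exp (-r * s)) (Real.exp (-r * s)) s := by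
    intro s _
    have h1 : HasDerivAt (fun s : ℝ => -r * s) (-r) s := by
      simpa using (hasDerivAt_id s).const_mul (-r)
    have h2 := (Real.hasDerivAt_exp (-r * s)).comp s h1
    have h3 := h2.const_mul (-(1/r))
    refine h3.congr_deriv ?_
    have hr' : r⁻¹ * r = 1 := inv_mul_cancel₀ hr
    linear_combination (Real.exp (-r * s)) * hr'
  have hcont : IntervalIntegrable (fun s => Real.exp (-r * s)) volume 0 τ :=
    (Real.continuous_exp.comp (continuous_const.mul continuous_id)).intervalIntegrable 0 τ
  rw [integral_eq_sub_of_hasDerivAt hderiv hcont]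
  field_simp
  ring
  rw [Real.exp_zero]; ring

lemma Glow1 (r τ : ℝ) (hτ : 0 ≤ τ) (hr : 1 ≤ r) :
    1 / r ≤ Real.exp (-r * τ) + ∫ s in (0:ℝ)..τ, Real.exp (-r * s) := by
  have hr0 : 0 < r := lt_of_lt_of_le one_pos hr
  rw [G_val r τ hr0.ne']
  have he0 : 0 < Real.exp (-r * τ) := Real.exp_pos _
  have he1 : Real.exp (-r * τ) ≤ 1 := Real.exp_le_one_iff.2 (by nlinarith)
  have hx : (1 - Real.exp (-r * τ)) / r * r = 1 - Real.exp (-r * τ) :=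
    div_mul_cancel₀ _ hr0.ne'
  rw [div_le_iff₀ hr0]
  nlinarith [mul_nonneg he0.le (sub_nonneg.2 hr)]

lemma Glow2 (r τ : ℝ) (hτ : 0 ≤ τ) (hr : r ≤ 1) :
    1 ≤ Real.exp (-r * τ) + ∫ s in (0:ℝ)..τ, Real.exp (-r * s) := by
  rcases le_or_gt r 0 with h | h
  · have he1 : 1 ≤ Real.exp (-r * τ) := Real.one_le_exp_iff.2 (by nlinarith)
    have hI : 0 ≤ ∫ s in (0:ℝ)..τ, Real.exp (-r * s) :=
      intervalIntegral.integral_nonneg hτ (fun u _ => (Real.exp_pos _).le)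
    linarith
  · rw [G_val r τ h.ne']
    have he0 : 0 < Real.exp (-r * τ) := Real.exp_pos _
    have he1 : Real.exp (-r * τ) ≤ 1 := Real.exp_le_one_iff.2 (by nlinarith)
    rw [← sub_nonneg]
    have : Real.exp (-r * τ) + (1 - Real.exp (-r * τ)) / r - 1
        = (1 - Real.exp (-r * τ)) * (1 - r) / r := by field_simp; ring
    rw [this]
    exact div_nonneg (mul_nonneg (by linarith) (by linarith)) h.le

lemma Ghigh1 (r τ : ℝ) (hτ : 0 ≤ τ) (hr : 1 ≤ r) :
    Real.exp (-r * τ) + (∫ s in (0:ℝ)..τ, Real.exp (-r * s)) ≤ 1 := by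
  have hr0 : 0 < r := lt_of_lt_of_le one_pos hr
  rw [G_val r τ hr0.ne']
  have he0 : 0 < Real.exp (-r * τ) := Real.exp_pos _
  have he1 : Real.exp (-r * τ) ≤ 1 := Real.exp_le_one_iff.2 (by nlinarith)
  have := div_le_self (sub_nonneg.2 he1) hr
  linarith

lemma Ghigh2 (r τ : ℝ) (hτ : 0 ≤ τ) (h0 : 0 < r) (hr : r ≤ 1) :
    Real.exp (-r * τ) + (∫ s in (0:ℝ)..τ, Real.exp (-r * s)) ≤ 1 / r := by
  rw [G_val r τ h0.ne']
  have he0 : 0 < Real.exp (-r * τ) := Real.exp_pos _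
  have he1 : Real.exp (-r * τ) ≤ 1 := Real.exp_le_one_iff.2 (by nlinarith)
  have hx : (1 - Real.exp (-r * τ)) / r * r = 1 - Real.exp (-r * τ) :=
    div_mul_cancel₀ _ h0.ne'
  rw [le_div_iff₀ h0]
  nlinarith [mul_nonneg (sub_nonneg.2 hr) he0.le]

lemma const_EI (r t T : ℝ) :
    Real.exp (∫ u in t..T, (fun _ : ℝ => -r) u) +
      (∫ s in t..T, Real.exp (∫ u in t..s, (fun _ : ℝ => -r) u)) =
    Real.exp (-r * (T - t)) + ∫ s in (0:ℝ)..(T - t), Real.exp (-r * s) := by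
  simp only [intervalIntegral.integral_const, smul_eq_mul]
  congr 1
  · rw [mul_comm]
  · have h1 : (∫ s in t..T, Real.exp ((s - t) * -r))
        = ∫ s in t..T, (fun x => Real.exp (-r * x)) (s - t) := by
      apply intervalIntegral.integral_congr
      intro x _
      simp [mul_comm]
    rw [h1, intervalIntegral.integral_comp_sub_right (fun x => Real.exp (-r * x)) t]
    simp

theorem stmt_18 (p T : ℝ) (hp : p < 0) (hT : 0 < T)
    (g : ℝ → ℝ) (hg : Measurable g) (Cg : ℝ) (hbd : ∀ t, |g t| ≤ Cg)
    (m M : ℝ) (hm : m = sInf (g '' Set.Icc 0 T)) (hM : M = sSup (g '' Set.Icc 0 T))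
    (c : ℝ → ℝ)
    (hc : ∀ t, c t =
      (Real.exp (∫ u in t..T, p * g u / (1 - p)) +
        ∫ s in t..T, Real.exp (∫ u in t..s, p * g u / (1 - p)))⁻¹) :
    ∀ t ∈ Set.Icc (0:ℝ) T,
      min (max (-p * m / (1 - p)) 0) 1 ≤ c t ∧ c t ≤ max (-p * M / (1 - p)) 1 := by
  intro t ht
  have h1p : (0:ℝ) < 1 - p := by linarith
  set f : ℝ → ℝ := fun u => p * g u / (1 - p) with hf
  have hfm : Measurable f := ((measurable_const.mul hg).div_const _)
  have hCg : 0 ≤ Cg := (abs_nonneg _).trans (hbd 0)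
  have hCf : ∀ x, |f x| ≤ |p| * Cg / (1 - p) := by
    intro x
    rw [hf]
    rw [abs_div, abs_mul, abs_of_pos h1p]
    gcongr
    exact hbd x
  -- bounds on g via inf/sup
  have hne : (g '' Set.Icc 0 T).Nonempty := ⟨g 0, ⟨0, ⟨le_rfl, hT.le⟩, rfl⟩⟩
  have hbdd_b : BddBelow (g '' Set.Icc 0 T) := ⟨-Cg, by
    rintro _ ⟨x, _, rfl⟩; linarith [(abs_le.1 (hbd x)).1]⟩
  have hbdd_a : BddAbove (g '' Set.Icc 0 T) := ⟨Cg, by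
    rintro _ ⟨x, _, rfl⟩; exact (abs_le.1 (hbd x)).2⟩
  have hgm : ∀ u ∈ Set.Icc (0:ℝ) T, m ≤ g u := by
    intro u hu; rw [hm]; exact csInf_le hbdd_b ⟨u, hu, rfl⟩
  have hgM : ∀ u ∈ Set.Icc (0:ℝ) T, g u ≤ M := by
    intro u hu; rw [hM]; exact le_csSup hbdd_a ⟨u, hu, rfl⟩
  set a : ℝ := -p * m / (1 - p) with ha
  set b : ℝ := -p * M / (1 - p) with hb
  have hsub : Set.Icc t T ⊆ Set.Icc (0:ℝ) T := Set.Icc_subset_Icc ht.1 le_rfl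
  have hfl : ∀ u ∈ Set.Icc t T, (fun _ : ℝ => -b) u ≤ f u := by
    intro u hu
    have := hgM u (hsub hu)
    simp only [hf, hb, neg_mul, neg_div, neg_neg]
    exact (div_le_div_iff_of_pos_right h1p).2 (by nlinarith)
  have hfu : ∀ u ∈ Set.Icc t T, f u ≤ (fun _ : ℝ => -a) u := by
    intro u hu
    have := hgm u (hsub hu)
    simp only [hf, ha, neg_mul, neg_div, neg_neg]
    exact (div_le_div_iff_of_pos_right h1p).2 (by nlinarith)
  have htT : t ≤ T := ht.2
  have hτ : 0 ≤ T - t := by linarith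
  set EI : ℝ := Real.exp (∫ u in t..T, f u) + ∫ s in t..T, Real.exp (∫ u in t..s, f u)
    with hEI
  have hcb : ∀ r : ℝ, ∀ x : ℝ, |(fun _ : ℝ => -r) x| ≤ |r| := fun r x => by simp
  have hlow : Real.exp (-b * (T - t)) + (∫ s in (0:ℝ)..(T - t), Real.exp (-b * s)) ≤ EI := by
    rw [← const_EI b t T]
    exact key_mono _ f measurable_const hfm (|b|) (|p| * Cg / (1 - p)) (hcb b) hCf t T htT hfl
  have hhigh : EI ≤ Real.exp (-a * (T - t)) + ∫ s in (0:ℝ)..(T - t), Real.exp (-a * s) := by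
    rw [← const_EI a t T]
    exact key_mono f _ hfm measurable_const (|p| * Cg / (1 - p)) (|a|) hCf (hcb a) t T htT hfu
  have hEIpos : 0 < EI := by
    have hI : 0 ≤ ∫ s in t..T, Real.exp (∫ u in t..s, f u) :=
      intervalIntegral.integral_nonneg htT (fun u _ => (Real.exp_pos _).le)
    have := Real.exp_pos (∫ u in t..T, f u)
    rw [hEI]; linarith
  have hct : c t = EI⁻¹ := hc t
  constructor
  · -- lower bound
    rcases le_or_gt a 0 with h | h
    · calc min (max a 0) 1 ≤ max a 0 := min_le_left _ _
        _ = 0 := max_eq_right h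
        _ ≤ c t := by rw [hct]; positivity
    · rcases le_or_gt a 1 with h1 | h1
      · have hEIle : EI ≤ 1 / a := hhigh.trans (Ghigh2 a (T - t) hτ h h1)
        have : a ≤ EI⁻¹ := by
          have := inv_anti₀ hEIpos hEIle
          rwa [one_div, inv_inv] at this
        calc min (max a 0) 1 ≤ max a 0 := min_le_left _ _
          _ = a := max_eq_left h.le
          _ ≤ c t := by rw [hct]; exact this
      · have hEIle : EI ≤ 1 := hhigh.trans (Ghigh1 a (T - t) hτ h1.le)
        calc min (max a 0) 1 ≤ 1 := min_le_right _ _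
          _ ≤ c t := by rw [hct]; exact (one_le_inv₀ hEIpos).2 hEIle
  · -- upper bound
    rcases le_or_gt b 1 with h | h
    · have hEIge : 1 ≤ EI := (Glow2 b (T - t) hτ h).trans hlow
      calc c t ≤ 1 := by rw [hct]; exact inv_le_one_of_one_le₀ hEIge
        _ ≤ max b 1 := le_max_right _ _
    · have hEIge : 1 / b ≤ EI := (Glow1 b (T - t) hτ h.le).trans hlow
      have hb0 : 0 < (1:ℝ) / b := by positivity
      have : EI⁻¹ ≤ b := by
        have := inv_anti₀ hb0 hEIge
        rwa [one_div, inv_inv] at this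
      calc c t ≤ b := by rw [hct]; exact this
        _ ≤ max b 1 := le_max_left _ _
end
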